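/- Let G be a locally finite connected infinite graph with one end, o a vertex, and suppose T is a spanning tree of G rooted at o with infinitely many ends (infinitely many pairwise disjoint infinite rays). Then for each n there is a radius R such that every minimal edge cutset of size at most n separating o from infinity contains an edge with an endpoint in the ball B_R(o). -/

import Mathlib

/-- `f` is an infinite (injective) ray. -/
def IsRay {V : Type*} (G : SimpleGraph V) (f : ℕ → V) : Prop :=
  Function.Injective f ∧ ∀ n, G.Adj (f n) (f (n + 1))

/-- The finite edge set `P` separates `o` from infinity. -/
def SepInf {V : Type*} (G : SimpleGraph V) (o : V) (P : Finset (Sym2 V)) : Prop :=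
  ∀ f : ℕ → V, IsRay G f → f 0 = o → ∃ n, s(f n, f (n + 1)) ∈ P

/-- `P` is a minimal edge cutset separating `o` from infinity. -/
def MinCutset {V : Type*} (G : SimpleGraph V) (o : V) (P : Finset (Sym2 V)) : Prop :=
  (P : Set (Sym2 V)) ⊆ G.edgeSet ∧ SepInf G o P ∧ ∀ Q ⊂ P, ¬ SepInf G o Q

private lemma getVert_eq_getElem {V : Type*} {G : SimpleGraph V} {u v : V}
    (p : G.Walk u v) (n : ℕ) (h : n ≤ p.length) :
    p.getVert n = p.support[n]'(by rw [SimpleGraph.Walk.length_support]; omega) := by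
  induction p generalizing n with
  | nil =>
    have : n = 0 := by simpa using h
    subst this
    simp [SimpleGraph.Walk.getVert]
  | cons ha q ih =>
    cases n with
    | zero => simp
    | succ m =>
      simp only [SimpleGraph.Walk.getVert_cons_succ, SimpleGraph.Walk.support_cons,
        List.getElem_cons_succ]
      exact ih m (by simpa using h)

private lemma getVert_injOn_of_isPath {V : Type*} {G : SimpleGraph V} {u v : V}
    {p : G.Walk u v} (hp : p.IsPath) {a b : ℕ} (ha : a ≤ p.length) (hb : b ≤ p.length)
    (hab : p.getVert a = p.getVert b) : a = b := by
  rw [getVert_eq_getElem p a ha, getVert_eq_getElem p b hb] at hab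
  exact (hp.support_nodup.getElem_inj_iff).mp hab

/-- let `G` be a one-ended locally finite connected infinite graph, and
`T` a spanning tree rooted at `o` with infinitely many pairwise vertex-disjoint rays.
Then for each `n` there is `R` such that every minimal cutset of size at most `n`
separating `o` from infinity has an edge with an endpoint in the ball `B_R(o)`. -/
theorem stmt12 {V : Type*} (G : SimpleGraph V) [∀ v, Fintype (G.neighborSet v)]
    (hconn : G.Connected) (hinf : Infinite V)
    (hone : Nat.card G.end = 1)
    (o : V) (T : SimpleGraph V) (hTsub : T ≤ G)
    (hTconn : T.Connected) (hTac : T.IsAcyclic)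
    (hrays : ∃ F : ℕ → ℕ → V, (∀ i, IsRay T (F i)) ∧
      Pairwise fun i j => Disjoint (Set.range (F i)) (Set.range (F j))) :
    ∀ n : ℕ, ∃ R : ℕ, ∀ P : Finset (Sym2 V), MinCutset G o P → P.card ≤ n →
      ∃ e ∈ P, ∃ v ∈ e, G.dist o v ≤ R := by
  classical
  obtain ⟨F, hF, hdisj⟩ := hrays
  intro n
  refine ⟨(Finset.range (n + 1)).sup fun i => G.dist o (F i 0), ?_⟩
  set R := (Finset.range (n + 1)).sup fun i => G.dist o (F i 0) with hR
  intro P hP hcard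
  by_contra hcon
  push_neg at hcon
  -- Key claim: each of the first `n+1` rays uses an edge of `P`.
  have key : ∀ i ∈ Finset.range (n + 1), ∃ k, s(F i k, F i (k + 1)) ∈ P := by
    intro i hi
    obtain ⟨p0, hp0len⟩ := hconn.exists_walk_length_eq_dist o (F i 0)
    set p : G.Walk o (F i 0) := p0.bypass with hpdef
    have hpath : p.IsPath := p0.bypass_isPath
    have hplen : p.length ≤ R := by
      calc p.length ≤ p0.length := SimpleGraph.Walk.length_bypass_le _
        _ = G.dist o (F i 0) := hp0len
        _ ≤ R := Finset.le_sup (f := fun i => G.dist o (F i 0)) hi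
    have hdist : ∀ w ∈ p.support, G.dist o w ≤ R := by
      intro w hw
      calc G.dist o w ≤ (p.takeUntil w hw).length := SimpleGraph.dist_le _
        _ ≤ p.length := SimpleGraph.Walk.length_takeUntil_le p hw
        _ ≤ R := hplen
    -- the last index of the ray appearing on `p`
    have hSfin : {k | F i k ∈ p.support}.Finite := by
      have : {k | F i k ∈ p.support} = F i ⁻¹' {w | w ∈ p.support} := rfl
      rw [this]
      exact Set.Finite.preimage ((hF i).1.injOn) (p.support.finite_toSet)
    have h0S : 0 ∈ hSfin.toFinset := by
      simp only [Set.Finite.mem_toFinset, Set.mem_setOf_eq]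
      exact SimpleGraph.Walk.end_mem_support p
    set K := hSfin.toFinset.max' ⟨0, h0S⟩ with hKdef
    have hmaxK : ∀ k, F i k ∈ p.support → k ≤ K := by
      intro k hk
      exact hSfin.toFinset.le_max' k (by simpa using hk)
    have hKmem : F i K ∈ p.support := by
      have := hSfin.toFinset.max'_mem ⟨0, h0S⟩
      simpa using this
    set q : G.Walk o (F i K) := p.takeUntil (F i K) hKmem with hqdef
    have hqpath : q.IsPath := hpath.takeUntil hKmem
    have hqsup : q.support ⊆ p.support := SimpleGraph.Walk.support_takeUntil_subset p hKmem
    set L := q.length with hLdef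
    -- the concatenated ray
    set r : ℕ → V := fun m => if m < L then q.getVert m else F i (K + (m - L)) with hrdef
    have hr_le : ∀ m, m ≤ L → r m = q.getVert m := by
      intro m hm
      rcases lt_or_eq_of_le hm with h | h
      · simp [hrdef, h]
      · subst h
        simp only [hrdef, lt_irrefl, if_false]
        rw [Nat.sub_self, Nat.add_zero]
        exact q.getVert_length.symm
    have hr_ge : ∀ m, L ≤ m → r m = F i (K + (m - L)) := by
      intro m hm
      rcases lt_or_eq_of_le hm with h | h
      · simp [hrdef, Nat.not_lt.mpr (le_of_lt h)]
      · subst h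
        simp [hrdef]
    have hrinj : Function.Injective r := by
      intro a b hab
      by_cases haL : a ≤ L <;> by_cases hbL : b ≤ L
      · rw [hr_le a haL, hr_le b hbL] at hab
        exact getVert_injOn_of_isPath hqpath haL hbL hab
      · push_neg at hbL
        rw [hr_le a haL, hr_ge b (le_of_lt hbL)] at hab
        exfalso
        have hmem : F i (K + (b - L)) ∈ p.support := by
          rw [← hab]
          exact hqsup (SimpleGraph.Walk.mem_support_iff_exists_getVert.mpr ⟨a, rfl, haL⟩)
        have := hmaxK _ hmem
        omega
      · push_neg at haL
        rw [hr_ge a (le_of_lt haL), hr_le b hbL] at hab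
        exfalso
        have hmem : F i (K + (a - L)) ∈ p.support := by
          rw [hab]
          exact hqsup (SimpleGraph.Walk.mem_support_iff_exists_getVert.mpr ⟨b, rfl, hbL⟩)
        have := hmaxK _ hmem
        omega
      · push_neg at haL hbL
        rw [hr_ge a (le_of_lt haL), hr_ge b (le_of_lt hbL)] at hab
        have := (hF i).1 hab
        omega
    have hradj : ∀ m, G.Adj (r m) (r (m + 1)) := by
      intro m
      by_cases hm : m < L
      · rw [hr_le m (le_of_lt hm), hr_le (m + 1) hm]
        exact q.adj_getVert_succ hm
      · push_neg at hm
        rw [hr_ge m hm, hr_ge (m + 1) (le_trans hm (Nat.le_succ m))]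
        have : K + (m + 1 - L) = K + (m - L) + 1 := by omega
        rw [this]
        exact hTsub ((hF i).2 (K + (m - L)))
    have hr0 : r 0 = o := by
      rw [hr_le 0 (Nat.zero_le _)]
      exact q.getVert_zero
    obtain ⟨m, hm⟩ := hP.2.1 r ⟨hrinj, hradj⟩ hr0
    by_cases hmL : m < L
    · exfalso
      have hv : r m ∈ p.support := by
        rw [hr_le m (le_of_lt hmL)]
        exact hqsup (SimpleGraph.Walk.mem_support_iff_exists_getVert.mpr
          ⟨m, rfl, le_of_lt hmL⟩)
      exact absurd (hdist _ hv) (Nat.not_le.mpr (hcon _ hm (r m) (Sym2.mem_mk_left _ _)))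
    · push_neg at hmL
      refine ⟨K + (m - L), ?_⟩
      have h1 : r m = F i (K + (m - L)) := hr_ge m hmL
      have h2 : r (m + 1) = F i (K + (m - L) + 1) := by
        rw [hr_ge (m + 1) (le_trans hmL (Nat.le_succ m))]
        congr 1
        omega
      rwa [h1, h2] at hm
  -- From the claim, `P` contains `n+1` distinct edges, a contradiction.
  choose k hk using key
  have hinj : ∀ i (hi : i ∈ Finset.range (n + 1)) j (hj : j ∈ Finset.range (n + 1)),
      s(F i (k i hi), F i (k i hi + 1)) = s(F j (k j hj), F j (k j hj + 1)) → i = j := by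
    intro i hi j hj hij
    by_contra hne
    have hd := hdisj hne
    have hmem : F i (k i hi) ∈ s(F j (k j hj), F j (k j hj + 1)) := by
      rw [← hij]
      exact Sym2.mem_mk_left _ _
    rw [Sym2.mem_iff] at hmem
    rcases hmem with h | h
    · exact Set.disjoint_left.mp hd ⟨k i hi, rfl⟩ ⟨k j hj, h.symm⟩
    · exact Set.disjoint_left.mp hd ⟨k i hi, rfl⟩ ⟨k j hj + 1, h.symm⟩
  have hcards : (Finset.range (n + 1)).card ≤ P.card := by
    apply Finset.card_le_card_of_injOn (fun i => if hi : i ∈ Finset.range (n + 1)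
      then s(F i (k i hi), F i (k i hi + 1)) else s(F i 0, F i 0))
    · intro i hi
      rw [Finset.mem_coe] at hi
      simp only [hi, dif_pos]
      exact hk i hi
    · intro i hi j hj hij
      simp only [Finset.mem_coe] at hi hj
      simp only [hi, hj, dif_pos] at hij
      exact hinj i hi j hj hij
  simp only [Finset.card_range] at hcards
  omega
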